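/- Let m be a positive integer. Then, for Im τ > 0 and z₁, z₂ ∉ ℤ + ℤτ, Φ^{A₁|₁[m]}(τ, z₁, z₂, t) = (D₀ Φ^{[m−1]})(τ, z₁, z₂, t), i.e. the series defining Φ^{A₁|₁[m]} equals (1/2πi)(∂/∂z₁ − ∂/∂z₂) applied to Φ^{[m−1]}. -/

import Mathlib

open Complex MeasureTheory

namespace KW

local notation "π" => (Real.pi : ℂ)

/-- The lattice `ℤ + ℤτ`. -/
def InLattice (τ z : ℂ) : Prop := ∃ a b : ℤ, z = (a : ℂ) + (b : ℂ) * τ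

/-- The mock theta function `Φ^[m]` of Kac–Wakimoto. -/
noncomputable def Phi (m : ℕ) (τ z₁ z₂ t : ℂ) : ℂ :=
  exp (2 * π * I * ((m : ℂ) + 1) * t) *
    ∑' j : ℤ,
      (exp (2 * π * I * (j : ℂ) * ((m : ℂ) + 1) * (z₁ + z₂)) *
            exp (2 * π * I * τ * (((m : ℂ) + 1) * (j : ℂ) ^ 2)) /
          (1 - exp (2 * π * I * z₁) * exp (2 * π * I * τ * (j : ℂ))) -
        exp (-(2 * π * I * (j : ℂ) * ((m : ℂ) + 1) * (z₁ + z₂))) *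
            exp (2 * π * I * τ * (((m : ℂ) + 1) * (j : ℂ) ^ 2)) /
          (1 - exp (-(2 * π * I * z₂)) * exp (2 * π * I * τ * (j : ℂ))))

/-- The numerator `Φ^{A₁|₁[m]}` of the `A(1|1)^` normalized supercharacter. -/
noncomputable def PhiA (m : ℕ) (τ z₁ z₂ t : ℂ) : ℂ :=
  exp (2 * π * I * (m : ℂ) * t) *
    ∑' j : ℤ,
      (exp (2 * π * I * (j : ℂ) * (m : ℂ) * (z₁ + z₂)) * exp (2 * π * I * z₁) *
            exp (2 * π * I * τ * ((m : ℂ) * (j : ℂ) ^ 2 + (j : ℂ))) /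
          (1 - exp (2 * π * I * z₁) * exp (2 * π * I * τ * (j : ℂ))) ^ 2 -
        exp (-(2 * π * I * (j : ℂ) * (m : ℂ) * (z₁ + z₂))) * exp (-(2 * π * I * z₂)) *
            exp (2 * π * I * τ * ((m : ℂ) * (j : ℂ) ^ 2 + (j : ℂ))) /
          (1 - exp (-(2 * π * I * z₂)) * exp (2 * π * I * τ * (j : ℂ))) ^ 2)

/- ---------------- auxiliary material ---------------- -/

lemma two_pi_I_ne : (2 : ℂ) * π * I ≠ 0 := by
  simp [Real.pi_ne_zero, Complex.I_ne_zero]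

lemma not_lattice_neg {τ z : ℂ} (h : ¬ InLattice τ z) : ¬ InLattice τ (-z) := by
  rintro ⟨a, b, hab⟩
  exact h ⟨-a, -b, by push_cast; linear_combination -hab⟩

lemma exp_ne_one {τ z : ℂ} (h : ¬ InLattice τ z) (j : ℤ) :
    exp (2 * π * I * z) * exp (2 * π * I * τ * (j : ℂ)) ≠ 1 := by
  rw [← Complex.exp_add]
  intro hc
  obtain ⟨n, hn⟩ := Complex.exp_eq_one_iff.mp hc
  exact h ⟨n, -j, mul_left_cancel₀ two_pi_I_ne (by push_cast; linear_combination hn)⟩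

lemma isClosed_lattice {τ : ℂ} (hτ : 0 < τ.im) : IsClosed {z : ℂ | InLattice τ z} := by
  have hne : τ.im ≠ 0 := ne_of_gt hτ
  have : {z : ℂ | InLattice τ z} =
      (fun z : ℂ => (z.re - z.im / τ.im * τ.re, z.im / τ.im)) ⁻¹'
        ((Set.range ((↑) : ℤ → ℝ)) ×ˢ (Set.range ((↑) : ℤ → ℝ))) := by
    ext z
    simp only [Set.mem_setOf_eq, Set.mem_preimage, Set.mem_prod, Set.mem_range]
    constructor
    · rintro ⟨a, b, rfl⟩
      constructor
      · exact ⟨a, by simp; field_simp; ring⟩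
      · exact ⟨b, by simp; field_simp⟩
    · rintro ⟨⟨a, ha⟩, ⟨b, hb⟩⟩
      refine ⟨a, b, ?_⟩
      have hb' : z.im = b * τ.im := by field_simp at hb; linarith [hb]
      apply Complex.ext
      · simp only [add_re, intCast_re, mul_re, intCast_im]
        rw [ha, hb]
        ring
      · simp only [add_im, intCast_im, mul_im, intCast_re]
        rw [hb']
        ring
  rw [this]
  apply IsClosed.preimage (by fun_prop)
  exact (Int.isClosedEmbedding_coe_real.isClosed_range).prod
    Int.isClosedEmbedding_coe_real.isClosed_range

lemma norm_exp_2piI (z : ℂ) : ‖exp (2 * π * I * z)‖ = Real.exp (-(2 * Real.pi * z.im)) := by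
  rw [Complex.norm_exp]
  congr 1
  have : (2 : ℂ) * π * I * z = ((2 * Real.pi : ℝ) : ℂ) * z * I := by push_cast; ring
  rw [this, Complex.mul_I_re, Complex.im_ofReal_mul]

lemma denom_lower {τ : ℂ} (hτ : 0 < τ.im) {K : Set ℂ} (hK : IsCompact K)
    (hKl : ∀ w ∈ K, ¬ InLattice τ w) :
    ∃ c > 0, ∀ (j : ℤ), ∀ w ∈ K,
      c ≤ ‖1 - exp (2 * π * I * w) * exp (2 * π * I * τ * (j : ℂ))‖ := by
  rcases K.eq_empty_or_nonempty with rfl | hKne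
  · exact ⟨1, one_pos, by simp⟩
  obtain ⟨M, hM⟩ := hK.isBounded.exists_norm_le
  have hM0 : 0 ≤ M := le_trans (norm_nonneg _) (hM hKne.choose hKne.choose_spec)
  have hMim : ∀ w ∈ K, |w.im| ≤ M := fun w hw => le_trans (Complex.abs_im_le_norm w) (hM w hw)
  obtain ⟨J, hJ⟩ := exists_nat_gt ((M + 1) / τ.im)
  have hJτ : M + 1 < J * τ.im := by
    rw [div_lt_iff₀ hτ] at hJ; linarith
  have hcomb : ∀ (j : ℤ) (w : ℂ), exp (2 * π * I * w) * exp (2 * π * I * τ * (j : ℂ))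
      = exp (2 * π * I * (w + (j : ℂ) * τ)) := by
    intro j w; rw [← Complex.exp_add]; ring_nf
  set S : Set ℂ := ⋃ j ∈ Finset.Icc (-(J : ℤ)) (J : ℤ), (fun w => w + (j : ℂ) * τ) '' K with hS
  have hScomp : IsCompact S := (Finset.Icc (-(J:ℤ)) (J:ℤ)).isCompact_biUnion
    (fun j _ => hK.image (by fun_prop))
  have hSne : S.Nonempty := by
    refine ⟨hKne.choose + (0 : ℤ) * τ, ?_⟩
    simp only [hS, Set.mem_iUnion]
    exact ⟨0, by simp, hKne.choose, hKne.choose_spec, rfl⟩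
  have hgc : ContinuousOn (fun ζ : ℂ => ‖1 - exp (2 * π * I * ζ)‖) S := by fun_prop
  obtain ⟨ζ₀, hζ₀S, hζ₀min⟩ := hScomp.exists_isMinOn hSne hgc
  set c₁ := ‖1 - exp (2 * π * I * ζ₀)‖ with hc₁
  have hc₁pos : 0 < c₁ := by
    simp only [hS, Set.mem_iUnion] at hζ₀S
    obtain ⟨j, hj, w, hw, rfl⟩ := hζ₀S
    rw [hc₁, norm_pos_iff, sub_ne_zero]
    intro hcontr
    exact exp_ne_one (hKl w hw) j (by rw [hcomb]; exact hcontr.symm)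
  refine ⟨min c₁ (1/2), lt_min hc₁pos (by norm_num), fun j w hw => ?_⟩
  by_cases hj : j ∈ Finset.Icc (-(J : ℤ)) (J : ℤ)
  · rw [hcomb]
    refine le_trans (min_le_left _ _) (hζ₀min ?_)
    simp only [hS, Set.mem_iUnion]
    exact ⟨j, hj, w, hw, rfl⟩
  · have hnorm : ‖exp (2 * π * I * w) * exp (2 * π * I * τ * (j : ℂ))‖
        = Real.exp (-(2 * Real.pi * (w.im + (j : ℝ) * τ.im))) := by
      rw [hcomb, norm_exp_2piI]
      congr 2
      simp
    have habs := hMim w hw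
    have hexp1 : (2 : ℝ) ≤ Real.exp 1 := by
      have := Real.add_one_le_exp 1; linarith
    simp only [Finset.mem_Icc, not_and_or, not_le] at hj
    rcases hj with hj | hj
    · have hjr : (j : ℝ) ≤ -(J : ℝ) := by exact_mod_cast hj.le
      have him : w.im + (j : ℝ) * τ.im ≤ -1 := by
        have : (j : ℝ) * τ.im ≤ -(J : ℝ) * τ.im :=
          mul_le_mul_of_nonneg_right hjr hτ.le
        have habs' : w.im ≤ M := (abs_le.mp habs).2
        nlinarith
      have hbig : 2 ≤ ‖exp (2 * π * I * w) * exp (2 * π * I * τ * (j : ℂ))‖ := by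
        rw [hnorm]
        calc (2:ℝ) ≤ Real.exp 1 := hexp1
        _ ≤ Real.exp (-(2 * Real.pi * (w.im + (j:ℝ) * τ.im))) := by
            apply Real.exp_le_exp.mpr
            nlinarith [Real.pi_gt_three]
      calc min c₁ (1/2) ≤ 1/2 := min_le_right _ _
      _ ≤ ‖exp (2 * π * I * w) * exp (2 * π * I * τ * (j : ℂ))‖ - ‖(1:ℂ)‖ := by
          rw [norm_one]; linarith
      _ ≤ ‖1 - exp (2 * π * I * w) * exp (2 * π * I * τ * (j : ℂ))‖ := by
          rw [norm_sub_rev]; exact norm_sub_norm_le _ _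
    · have hjr : (J : ℝ) ≤ (j : ℝ) := by exact_mod_cast hj.le
      have him : 1 ≤ w.im + (j : ℝ) * τ.im := by
        have : (J : ℝ) * τ.im ≤ (j : ℝ) * τ.im :=
          mul_le_mul_of_nonneg_right hjr hτ.le
        have habs' : -M ≤ w.im := (abs_le.mp habs).1
        nlinarith
      have hsmall : ‖exp (2 * π * I * w) * exp (2 * π * I * τ * (j : ℂ))‖ ≤ 1/2 := by
        rw [hnorm]
        have h1 : Real.exp (-(2 * Real.pi * (w.im + (j:ℝ) * τ.im))) ≤ Real.exp (-1) := by
          apply Real.exp_le_exp.mpr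
          nlinarith [Real.pi_gt_three]
        have h2 : Real.exp (-1) ≤ 1/2 := by
          rw [Real.exp_neg, inv_le_comm₀ (Real.exp_pos 1) (by norm_num)]
          linarith
        linarith
      calc min c₁ (1/2) ≤ 1/2 := min_le_right _ _
      _ ≤ ‖(1:ℂ)‖ - ‖exp (2 * π * I * w) * exp (2 * π * I * τ * (j : ℂ))‖ := by
          rw [norm_one]; linarith
      _ ≤ ‖1 - exp (2 * π * I * w) * exp (2 * π * I * τ * (j : ℂ))‖ :=
          norm_sub_norm_le _ _

lemma term_norm_le (m : ℕ) {τ : ℂ} {S : ℝ} (j : ℤ) {a : ℂ}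
    (ha : |a.im| ≤ S) :
    ‖exp (2*π*I*(j:ℂ)*(m:ℂ)*a) * exp (2*π*I*τ*((m:ℂ)*(j:ℂ)^2))‖
      ≤ Real.exp (-Real.pi * (2*τ.im*(m:ℝ) * (j:ℝ)^2 - 2*((m:ℝ)*S) * |(j:ℝ)|)) ∧
    ‖exp (-(2*π*I*(j:ℂ)*(m:ℂ)*a)) * exp (2*π*I*τ*((m:ℂ)*(j:ℂ)^2))‖
      ≤ Real.exp (-Real.pi * (2*τ.im*(m:ℝ) * (j:ℝ)^2 - 2*((m:ℝ)*S) * |(j:ℝ)|)) := by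
  have e1 : (2*π*I*(j:ℂ)*(m:ℂ)*a) = 2*π*I*((((j:ℝ)*(m:ℝ) : ℝ) : ℂ)*a) := by push_cast; ring
  have e2 : (2*π*I*τ*((m:ℂ)*(j:ℂ)^2)) = 2*π*I*((((m:ℝ)*(j:ℝ)^2 : ℝ) : ℂ)*τ) := by
    push_cast; ring
  have h1 : ‖exp (2*π*I*(j:ℂ)*(m:ℂ)*a)‖ = Real.exp (-(2*Real.pi*((j:ℝ)*(m:ℝ)*a.im))) := by
    rw [e1, norm_exp_2piI, Complex.im_ofReal_mul]
  have h1' : ‖exp (-(2*π*I*(j:ℂ)*(m:ℂ)*a))‖ = Real.exp (2*Real.pi*((j:ℝ)*(m:ℝ)*a.im)) := by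
    have e1' : -(2*π*I*(j:ℂ)*(m:ℂ)*a) = 2*π*I*((((-(j:ℝ))*(m:ℝ) : ℝ) : ℂ)*a) := by
      push_cast; ring
    rw [e1', norm_exp_2piI, Complex.im_ofReal_mul]
    ring_nf
  have h2 : ‖exp (2*π*I*τ*((m:ℂ)*(j:ℂ)^2))‖
      = Real.exp (-(2*Real.pi*((m:ℝ)*(j:ℝ)^2*τ.im))) := by
    rw [e2, norm_exp_2piI, Complex.im_ofReal_mul]
  have key : |(j:ℝ)*(m:ℝ)*a.im| ≤ (m:ℝ)*S*|(j:ℝ)| := by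
    rw [abs_mul, abs_mul]
    have hm' : |(m:ℝ)| = (m:ℝ) := abs_of_nonneg (Nat.cast_nonneg m)
    rw [hm']
    calc |(j:ℝ)| * (m:ℝ) * |a.im| ≤ |(j:ℝ)| * (m:ℝ) * S := by
          apply mul_le_mul_of_nonneg_left ha (by positivity)
    _ = (m:ℝ)*S*|(j:ℝ)| := by ring
  have habs := abs_le.mp key
  constructor
  · rw [norm_mul, h1, h2, ← Real.exp_add]
    apply Real.exp_le_exp.mpr
    nlinarith [Real.pi_pos]
  · rw [norm_mul, h1', h2, ← Real.exp_add]
    apply Real.exp_le_exp.mpr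
    nlinarith [Real.pi_pos]

lemma summable_bound (m : ℕ) (hm : 1 ≤ m) {τ : ℂ} (hτ : 0 < τ.im) (S : ℝ) (c : ℝ) :
    Summable (fun j : ℤ =>
      2 * Real.exp (-Real.pi * (2*τ.im*(m:ℝ) * (j:ℝ)^2 - 2*((m:ℝ)*S) * |(j:ℝ)|)) / c) := by
  have hm' : (0:ℝ) < (m:ℝ) := by exact_mod_cast hm
  have hT : 0 < 2*τ.im*(m:ℝ) := by positivity
  have := (summable_pow_mul_jacobiTheta₂_term_bound ((m:ℝ)*S) hT 0).mul_left (2/c)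
  apply this.congr
  intro j
  simp only [pow_zero, one_mul]
  rw [Int.cast_abs]
  ring

/-- term of the `z₁`-series and its derivative -/
noncomputable def f1 (m : ℕ) (τ z₂ : ℂ) (j : ℤ) : ℂ → ℂ := fun w =>
  exp (2*π*I*(j:ℂ)*(m:ℂ)*(w+z₂)) * exp (2*π*I*τ*((m:ℂ)*(j:ℂ)^2)) /
      (1 - exp (2*π*I*w) * exp (2*π*I*τ*(j:ℂ)))
    - exp (-(2*π*I*(j:ℂ)*(m:ℂ)*(w+z₂))) * exp (2*π*I*τ*((m:ℂ)*(j:ℂ)^2)) /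
      (1 - exp (-(2*π*I*z₂)) * exp (2*π*I*τ*(j:ℂ)))

noncomputable def g1 (m : ℕ) (τ z₂ : ℂ) (j : ℤ) : ℂ → ℂ := fun w =>
  (exp (2*π*I*(j:ℂ)*(m:ℂ)*(w+z₂)) * (2*π*I*(j:ℂ)*(m:ℂ)) * exp (2*π*I*τ*((m:ℂ)*(j:ℂ)^2)) *
        (1 - exp (2*π*I*w) * exp (2*π*I*τ*(j:ℂ)))
      - exp (2*π*I*(j:ℂ)*(m:ℂ)*(w+z₂)) * exp (2*π*I*τ*((m:ℂ)*(j:ℂ)^2)) *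
        (-(exp (2*π*I*w) * (2*π*I) * exp (2*π*I*τ*(j:ℂ)))))
    / (1 - exp (2*π*I*w) * exp (2*π*I*τ*(j:ℂ)))^2
  - exp (-(2*π*I*(j:ℂ)*(m:ℂ)*(w+z₂))) * (-(2*π*I*(j:ℂ)*(m:ℂ))) * exp (2*π*I*τ*((m:ℂ)*(j:ℂ)^2))
    / (1 - exp (-(2*π*I*z₂)) * exp (2*π*I*τ*(j:ℂ)))

/-- term of the `z₂`-series and its derivative -/
noncomputable def f2 (m : ℕ) (τ z₁ : ℂ) (j : ℤ) : ℂ → ℂ := fun w =>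
  exp (2*π*I*(j:ℂ)*(m:ℂ)*(z₁+w)) * exp (2*π*I*τ*((m:ℂ)*(j:ℂ)^2)) /
      (1 - exp (2*π*I*z₁) * exp (2*π*I*τ*(j:ℂ)))
    - exp (-(2*π*I*(j:ℂ)*(m:ℂ)*(z₁+w))) * exp (2*π*I*τ*((m:ℂ)*(j:ℂ)^2)) /
      (1 - exp (-(2*π*I*w)) * exp (2*π*I*τ*(j:ℂ)))

noncomputable def g2 (m : ℕ) (τ z₁ : ℂ) (j : ℤ) : ℂ → ℂ := fun w =>
  exp (2*π*I*(j:ℂ)*(m:ℂ)*(z₁+w)) * (2*π*I*(j:ℂ)*(m:ℂ)) * exp (2*π*I*τ*((m:ℂ)*(j:ℂ)^2))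
    / (1 - exp (2*π*I*z₁) * exp (2*π*I*τ*(j:ℂ)))
  - (exp (-(2*π*I*(j:ℂ)*(m:ℂ)*(z₁+w))) * (-(2*π*I*(j:ℂ)*(m:ℂ))) *
        exp (2*π*I*τ*((m:ℂ)*(j:ℂ)^2)) * (1 - exp (-(2*π*I*w)) * exp (2*π*I*τ*(j:ℂ)))
      - exp (-(2*π*I*(j:ℂ)*(m:ℂ)*(z₁+w))) * exp (2*π*I*τ*((m:ℂ)*(j:ℂ)^2)) *
        (-(exp (-(2*π*I*w)) * (-(2*π*I)) * exp (2*π*I*τ*(j:ℂ)))))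
    / (1 - exp (-(2*π*I*w)) * exp (2*π*I*τ*(j:ℂ)))^2

lemma hasDerivAt_term₁ (b Q P C c₂ : ℂ) {w : ℂ} (hD : 1 - exp (2*π*I*w)*P ≠ 0) :
    HasDerivAt (fun w => exp (b*(w+c₂)) * Q / (1 - exp (2*π*I*w)*P)
        - exp (-(b*(w+c₂))) * Q / C)
      ((exp (b*(w+c₂)) * b * Q * (1 - exp (2*π*I*w)*P)
          - exp (b*(w+c₂)) * Q * (-(exp (2*π*I*w) * (2*π*I) * P)))
            / (1 - exp (2*π*I*w)*P)^2
        - exp (-(b*(w+c₂))) * (-b) * Q / C) w := by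
  have h1 : HasDerivAt (fun w : ℂ => b*(w+c₂)) b w := by
    simpa using ((hasDerivAt_id w).add_const c₂).const_mul b
  have h2 : HasDerivAt (fun w : ℂ => exp (b*(w+c₂)) * Q) (exp (b*(w+c₂)) * b * Q) w := by
    simpa [mul_assoc] using h1.cexp.mul_const Q
  have h3 : HasDerivAt (fun w : ℂ => 1 - exp (2*π*I*w)*P)
      (-(exp (2*π*I*w) * (2*π*I) * P)) w := by
    simpa using ((((hasDerivAt_id w).const_mul (2*π*I)).cexp).mul_const P).const_sub 1
  have h4 : HasDerivAt (fun w : ℂ => exp (-(b*(w+c₂))) * Q)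
      (exp (-(b*(w+c₂))) * (-b) * Q) w := by
    simpa [mul_assoc] using h1.neg.cexp.mul_const Q
  exact (h2.div h3 hD).sub (h4.div_const C)

lemma hasDerivAt_term₂ (b Q P C c₁ : ℂ) {w : ℂ} (hD : 1 - exp (-(2*π*I*w))*P ≠ 0) :
    HasDerivAt (fun w => exp (b*(c₁+w)) * Q / C
        - exp (-(b*(c₁+w))) * Q / (1 - exp (-(2*π*I*w))*P))
      (exp (b*(c₁+w)) * b * Q / C
        - (exp (-(b*(c₁+w))) * (-b) * Q * (1 - exp (-(2*π*I*w))*P)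
            - exp (-(b*(c₁+w))) * Q * (-(exp (-(2*π*I*w)) * (-(2*π*I)) * P)))
              / (1 - exp (-(2*π*I*w))*P)^2) w := by
  have h1 : HasDerivAt (fun w : ℂ => b*(c₁+w)) b w := by
    simpa using ((hasDerivAt_id w).const_add c₁).const_mul b
  have h2 : HasDerivAt (fun w : ℂ => exp (b*(c₁+w)) * Q) (exp (b*(c₁+w)) * b * Q) w := by
    simpa [mul_assoc] using h1.cexp.mul_const Q
  have h3 : HasDerivAt (fun w : ℂ => 1 - exp (-(2*π*I*w))*P)
      (-(exp (-(2*π*I*w)) * (-(2*π*I)) * P)) w := by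
    simpa using ((((hasDerivAt_id w).const_mul (2*π*I)).neg.cexp).mul_const P).const_sub 1
  have h4 : HasDerivAt (fun w : ℂ => exp (-(b*(c₁+w))) * Q)
      (exp (-(b*(c₁+w))) * (-b) * Q) w := by
    simpa [mul_assoc] using h1.neg.cexp.mul_const Q
  exact (h2.div_const C).sub (h4.div h3 hD)

set_option maxHeartbeats 4000000 in
lemma hasDerivAt_f1 (m : ℕ) (τ z₂ : ℂ) (j : ℤ) {w : ℂ}
    (hD : 1 - exp (2*π*I*w) * exp (2*π*I*τ*(j:ℂ)) ≠ 0) :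
    HasDerivAt (f1 m τ z₂ j) (g1 m τ z₂ j w) w := by
  unfold f1 g1
  exact hasDerivAt_term₁ (2*π*I*(j:ℂ)*(m:ℂ)) (exp (2*π*I*τ*((m:ℂ)*(j:ℂ)^2)))
    (exp (2*π*I*τ*(j:ℂ))) (1 - exp (-(2*π*I*z₂)) * exp (2*π*I*τ*(j:ℂ))) z₂ hD

set_option maxHeartbeats 4000000 in
lemma hasDerivAt_f2 (m : ℕ) (τ z₁ : ℂ) (j : ℤ) {w : ℂ}
    (hD : 1 - exp (-(2*π*I*w)) * exp (2*π*I*τ*(j:ℂ)) ≠ 0) :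
    HasDerivAt (f2 m τ z₁ j) (g2 m τ z₁ j w) w := by
  unfold f2 g2
  exact hasDerivAt_term₂ (2*π*I*(j:ℂ)*(m:ℂ)) (exp (2*π*I*τ*((m:ℂ)*(j:ℂ)^2)))
    (exp (2*π*I*τ*(j:ℂ))) (1 - exp (2*π*I*z₁) * exp (2*π*I*τ*(j:ℂ))) z₁ hD

lemma algebra_id (X Y Q P E₁ E₂ b : ℂ) (hD₁ : 1 - E₁*P ≠ 0) (hD₂ : 1 - E₂*P ≠ 0) :
    X * E₁ * (Q*P) / (1-E₁*P)^2 - Y * E₂ * (Q*P) / (1-E₂*P)^2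
     = 1/(2*π*I) *
       (((X*b*Q*(1-E₁*P) - X*Q*(-(E₁*(2*π*I)*P)))/(1-E₁*P)^2 - Y*(-b)*Q/(1-E₂*P))
         - (X*b*Q/(1-E₁*P)
             - (Y*(-b)*Q*(1-E₂*P) - Y*Q*(-(E₂*(-(2*π*I))*P)))/(1-E₂*P)^2)) := by
  have h2 : (2:ℂ)*π*I ≠ 0 := two_pi_I_ne
  have key : (2*π*I) * (X * E₁ * (Q*P) / (1-E₁*P)^2 - Y * E₂ * (Q*P) / (1-E₂*P)^2)
      = (((X*b*Q*(1-E₁*P) - X*Q*(-(E₁*(2*π*I)*P)))/(1-E₁*P)^2 - Y*(-b)*Q/(1-E₂*P))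
         - (X*b*Q/(1-E₁*P)
             - (Y*(-b)*Q*(1-E₂*P) - Y*Q*(-(E₂*(-(2*π*I))*P)))/(1-E₂*P)^2)) := by
    have h1' : 1 - P*E₁ ≠ 0 := by rwa [mul_comm]
    have h2' : 1 - P*E₂ ≠ 0 := by rwa [mul_comm]
    field_simp
    ring
  rw [← key, one_div, inv_mul_cancel_left₀ h2]

set_option maxHeartbeats 16000000 in
/-- Lemma 8.1 of Kac–Wakimoto: `Φ^{A₁|₁[m]} = D₀ Φ^{[m-1]}`. -/
theorem statement15 (m : ℕ) (hm : 1 ≤ m) (τ z₁ z₂ t : ℂ) (hτ : 0 < τ.im)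
    (h₁ : ¬ InLattice τ z₁) (h₂ : ¬ InLattice τ z₂) :
    PhiA m τ z₁ z₂ t =
      (1 / (2 * π * I)) *
        (deriv (fun w => Phi (m - 1) τ w z₂ t) z₁ - deriv (fun w => Phi (m - 1) τ z₁ w t) z₂) := by
  have hM : ((m - 1 : ℕ) : ℂ) + 1 = (m : ℂ) := by
    rw [Nat.cast_sub hm]; push_cast; ring
  -- choice of ε
  have hL : IsClosed {z : ℂ | InLattice τ z} := isClosed_lattice hτ
  have hget : ∀ z : ℂ, ¬ InLattice τ z → ∃ ε > 0,
      ∀ w : ℂ, dist w z ≤ ε → ¬ InLattice τ w := by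
    intro z hz
    obtain ⟨ε, hε, hb⟩ := Metric.isOpen_iff.mp hL.isOpen_compl z hz
    refine ⟨ε/2, by linarith, fun w hw => ?_⟩
    exact hb (by rw [Metric.mem_ball]; linarith [hw])
  obtain ⟨ε₁, hε₁, hb₁⟩ := hget z₁ h₁
  obtain ⟨ε₂, hε₂, hb₂⟩ := hget (-z₂) (not_lattice_neg h₂)
  set ε := min ε₁ ε₂ with hε
  have hεpos : 0 < ε := lt_min hε₁ hε₂
  -- compact set and denominator bound
  set K : Set ℂ := Metric.closedBall z₁ ε ∪ Metric.closedBall (-z₂) ε with hK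
  have hKcomp : IsCompact K := (isCompact_closedBall _ _).union (isCompact_closedBall _ _)
  have hKl : ∀ w ∈ K, ¬ InLattice τ w := by
    rintro w (hw | hw)
    · exact hb₁ w (le_trans (Metric.mem_closedBall.mp hw) (min_le_left _ _))
    · exact hb₂ w (le_trans (Metric.mem_closedBall.mp hw) (min_le_right _ _))
  obtain ⟨c, hcpos, hcK⟩ := denom_lower hτ hKcomp hKl
  -- imaginary part bound
  set S : ℝ := ‖z₁‖ + ‖z₂‖ + ε with hSdef
  have himgen : ∀ (a b w : ℂ), dist w a ≤ ε → |(w + b).im| ≤ ‖a‖ + ‖b‖ + ε := by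
    intro a b w hw
    have h1 : |(w+b).im| ≤ |w.im| + |b.im| := by rw [Complex.add_im]; exact abs_add_le _ _
    have h2 : |w.im| ≤ |a.im| + |(w-a).im| := by
      calc |w.im| = |a.im + (w-a).im| := by rw [Complex.sub_im]; ring_nf
      _ ≤ _ := abs_add_le _ _
    have h3 : |(w-a).im| ≤ ‖w - a‖ := Complex.abs_im_le_norm _
    have h4 : ‖w - a‖ ≤ ε := by rw [← dist_eq_norm]; exact hw
    have h5 : |a.im| ≤ ‖a‖ := Complex.abs_im_le_norm _
    have h6 : |b.im| ≤ ‖b‖ := Complex.abs_im_le_norm _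
    linarith
  -- the summable bound
  set u : ℤ → ℝ := fun j =>
    2 * Real.exp (-Real.pi * (2*τ.im*(m:ℝ) * (j:ℝ)^2 - 2*((m:ℝ)*S) * |(j:ℝ)|)) / c with hu
  have husum : Summable u := summable_bound m hm hτ S c
  -- nonvanishing denominators
  have hDne : ∀ (w : ℂ), ¬ InLattice τ w → ∀ j : ℤ,
      1 - exp (2*π*I*w) * exp (2*π*I*τ*(j:ℂ)) ≠ 0 := by
    intro w hw j
    exact sub_ne_zero_of_ne (Ne.symm (exp_ne_one hw j))
  have hexpneg : ∀ w : ℂ, exp (-(2*π*I*w)) = exp (2*π*I*(-w)) := by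
    intro w; congr 1; ring
  have hD₂ne : ∀ j : ℤ, 1 - exp (-(2*π*I*z₂)) * exp (2*π*I*τ*(j:ℂ)) ≠ 0 := by
    intro j; rw [hexpneg]; exact hDne (-z₂) (not_lattice_neg h₂) j
  have hD₁ne : ∀ j : ℤ, 1 - exp (2*π*I*z₁) * exp (2*π*I*τ*(j:ℂ)) ≠ 0 :=
    hDne z₁ h₁
  ---- side 1 : derivative in z₁
  have hdiff₁ : ∀ j : ℤ, DifferentiableOn ℂ (f1 m τ z₂ j) (Metric.ball z₁ ε) := by
    intro j w hw
    have hwl : ¬ InLattice τ w :=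
      hb₁ w (le_trans (Metric.mem_ball.mp hw).le (min_le_left _ _))
    exact ((hasDerivAt_f1 m τ z₂ j (hDne w hwl j)).differentiableAt).differentiableWithinAt
  have hbound₁ : ∀ j : ℤ, ∀ w ∈ Metric.ball z₁ ε, ‖f1 m τ z₂ j w‖ ≤ u j := by
    intro j w hw
    have hwK : w ∈ K := Or.inl (Metric.ball_subset_closedBall hw)
    have hz₂K : -z₂ ∈ K := Or.inr (Metric.mem_closedBall_self hεpos.le)
    have hthm := term_norm_le m (τ := τ) j
      (a := w + z₂) (S := S) (himgen z₁ z₂ w (Metric.mem_ball.mp hw).le)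
    have hd1 : c ≤ ‖1 - exp (2*π*I*w) * exp (2*π*I*τ*(j:ℂ))‖ := hcK j w hwK
    have hd2 : c ≤ ‖1 - exp (-(2*π*I*z₂)) * exp (2*π*I*τ*(j:ℂ))‖ := by
      rw [hexpneg]; exact hcK j (-z₂) hz₂K
    unfold f1
    set N := Real.exp (-Real.pi * (2*τ.im*(m:ℝ) * (j:ℝ)^2 - 2*((m:ℝ)*S) * |(j:ℝ)|)) with hN
    have hN0 : 0 ≤ N := Real.exp_nonneg _
    calc ‖_ - _‖ ≤ ‖exp (2*π*I*(j:ℂ)*(m:ℂ)*(w+z₂)) * exp (2*π*I*τ*((m:ℂ)*(j:ℂ)^2)) /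
            (1 - exp (2*π*I*w) * exp (2*π*I*τ*(j:ℂ)))‖
          + ‖exp (-(2*π*I*(j:ℂ)*(m:ℂ)*(w+z₂))) * exp (2*π*I*τ*((m:ℂ)*(j:ℂ)^2)) /
            (1 - exp (-(2*π*I*z₂)) * exp (2*π*I*τ*(j:ℂ)))‖ := norm_sub_le _ _
    _ ≤ N / c + N / c := by
        rw [norm_div, norm_div]
        gcongr
        · exact hthm.1
        · exact hthm.2
    _ = u j := by rw [hu]; ring
  have key₁ : HasSum (fun j : ℤ => deriv (f1 m τ z₂ j) z₁)
      (deriv (fun w => ∑' j : ℤ, f1 m τ z₂ j w) z₁) :=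
    hasSum_deriv_of_summable_norm husum hdiff₁ Metric.isOpen_ball hbound₁
      (Metric.mem_ball_self hεpos)
  have hderiv₁ : ∀ j : ℤ, deriv (f1 m τ z₂ j) z₁ = g1 m τ z₂ j z₁ := fun j =>
    (hasDerivAt_f1 m τ z₂ j (hD₁ne j)).deriv
  have key₁' : HasSum (fun j : ℤ => g1 m τ z₂ j z₁)
      (deriv (fun w => ∑' j : ℤ, f1 m τ z₂ j w) z₁) := by
    rw [show (fun j : ℤ => g1 m τ z₂ j z₁) = fun j => deriv (f1 m τ z₂ j) z₁ from
      funext fun j => (hderiv₁ j).symm]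
    exact key₁
  ---- side 2 : derivative in z₂
  have hdiff₂ : ∀ j : ℤ, DifferentiableOn ℂ (f2 m τ z₁ j) (Metric.ball z₂ ε) := by
    intro j w hw
    have hwd : dist (-w) (-z₂) ≤ ε := by
      rw [dist_neg_neg]; exact (Metric.mem_ball.mp hw).le
    have hwl : ¬ InLattice τ (-w) := hb₂ (-w) (le_trans hwd (min_le_right _ _) |>.trans le_rfl)
    have hD : 1 - exp (-(2*π*I*w)) * exp (2*π*I*τ*(j:ℂ)) ≠ 0 := by
      rw [hexpneg]; exact hDne (-w) hwl j
    exact ((hasDerivAt_f2 m τ z₁ j hD).differentiableAt).differentiableWithinAt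
  have hbound₂ : ∀ j : ℤ, ∀ w ∈ Metric.ball z₂ ε, ‖f2 m τ z₁ j w‖ ≤ u j := by
    intro j w hw
    have hwd : dist (-w) (-z₂) ≤ ε := by
      rw [dist_neg_neg]; exact (Metric.mem_ball.mp hw).le
    have hwK : -w ∈ K := Or.inr (Metric.mem_closedBall.mpr hwd)
    have hz₁K : z₁ ∈ K := Or.inl (Metric.mem_closedBall_self hεpos.le)
    have him : |(z₁ + w).im| ≤ S := by
      have := himgen z₂ z₁ w (Metric.mem_ball.mp hw).le
      have heq : (z₁ + w).im = (w + z₁).im := by rw [Complex.add_im, Complex.add_im]; ring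
      rw [heq]
      calc |(w + z₁).im| ≤ ‖z₂‖ + ‖z₁‖ + ε := this
      _ = S := by rw [hSdef]; ring
    have hthm := term_norm_le m (τ := τ) j (a := z₁ + w) (S := S) him
    have hd1 : c ≤ ‖1 - exp (2*π*I*z₁) * exp (2*π*I*τ*(j:ℂ))‖ := hcK j z₁ hz₁K
    have hd2 : c ≤ ‖1 - exp (-(2*π*I*w)) * exp (2*π*I*τ*(j:ℂ))‖ := by
      rw [hexpneg]; exact hcK j (-w) hwK
    unfold f2
    set N := Real.exp (-Real.pi * (2*τ.im*(m:ℝ) * (j:ℝ)^2 - 2*((m:ℝ)*S) * |(j:ℝ)|)) with hN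
    have hN0 : 0 ≤ N := Real.exp_nonneg _
    calc ‖_ - _‖ ≤ ‖exp (2*π*I*(j:ℂ)*(m:ℂ)*(z₁+w)) * exp (2*π*I*τ*((m:ℂ)*(j:ℂ)^2)) /
            (1 - exp (2*π*I*z₁) * exp (2*π*I*τ*(j:ℂ)))‖
          + ‖exp (-(2*π*I*(j:ℂ)*(m:ℂ)*(z₁+w))) * exp (2*π*I*τ*((m:ℂ)*(j:ℂ)^2)) /
            (1 - exp (-(2*π*I*w)) * exp (2*π*I*τ*(j:ℂ)))‖ := norm_sub_le _ _
    _ ≤ N / c + N / c := by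
        rw [norm_div, norm_div]
        gcongr
        · exact hthm.1
        · exact hthm.2
    _ = u j := by rw [hu]; ring
  have key₂ : HasSum (fun j : ℤ => deriv (f2 m τ z₁ j) z₂)
      (deriv (fun w => ∑' j : ℤ, f2 m τ z₁ j w) z₂) :=
    hasSum_deriv_of_summable_norm husum hdiff₂ Metric.isOpen_ball hbound₂
      (Metric.mem_ball_self hεpos)
  have hderiv₂ : ∀ j : ℤ, deriv (f2 m τ z₁ j) z₂ = g2 m τ z₁ j z₂ := fun j =>
    (hasDerivAt_f2 m τ z₁ j (hD₂ne j)).deriv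
  have key₂' : HasSum (fun j : ℤ => g2 m τ z₁ j z₂)
      (deriv (fun w => ∑' j : ℤ, f2 m τ z₁ j w) z₂) := by
    rw [show (fun j : ℤ => g2 m τ z₁ j z₂) = fun j => deriv (f2 m τ z₁ j) z₂ from
      funext fun j => (hderiv₂ j).symm]
    exact key₂
  ---- rewriting Phi
  have hPhi1 : (fun w => Phi (m-1) τ w z₂ t)
      = fun w => exp (2*π*I*(m:ℂ)*t) * ∑' j : ℤ, f1 m τ z₂ j w := by
    funext w
    simp only [Phi, hM, f1]
  have hPhi2 : (fun w => Phi (m-1) τ z₁ w t)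
      = fun w => exp (2*π*I*(m:ℂ)*t) * ∑' j : ℤ, f2 m τ z₁ j w := by
    funext w
    simp only [Phi, hM, f2]
  have hd1eq : deriv (fun w => Phi (m-1) τ w z₂ t) z₁
      = exp (2*π*I*(m:ℂ)*t) * ∑' j : ℤ, g1 m τ z₂ j z₁ := by
    rw [hPhi1, deriv_const_mul_field, key₁'.tsum_eq]
  have hd2eq : deriv (fun w => Phi (m-1) τ z₁ w t) z₂
      = exp (2*π*I*(m:ℂ)*t) * ∑' j : ℤ, g2 m τ z₁ j z₂ := by
    rw [hPhi2, deriv_const_mul_field, key₂'.tsum_eq]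
  ---- final computation
  rw [hd1eq, hd2eq, PhiA]
  have hQP : ∀ j : ℤ, exp (2*π*I*τ*((m:ℂ)*(j:ℂ)^2 + (j:ℂ)))
      = exp (2*π*I*τ*((m:ℂ)*(j:ℂ)^2)) * exp (2*π*I*τ*(j:ℂ)) := by
    intro j; rw [← Complex.exp_add]; congr 1; ring
  have hterm : ∀ j : ℤ,
      (exp (2 * π * I * (j : ℂ) * (m : ℂ) * (z₁ + z₂)) * exp (2 * π * I * z₁) *
            exp (2 * π * I * τ * ((m : ℂ) * (j : ℂ) ^ 2 + (j : ℂ))) /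
          (1 - exp (2 * π * I * z₁) * exp (2 * π * I * τ * (j : ℂ))) ^ 2 -
        exp (-(2 * π * I * (j : ℂ) * (m : ℂ) * (z₁ + z₂))) * exp (-(2 * π * I * z₂)) *
            exp (2 * π * I * τ * ((m : ℂ) * (j : ℂ) ^ 2 + (j : ℂ))) /
          (1 - exp (-(2 * π * I * z₂)) * exp (2 * π * I * τ * (j : ℂ))) ^ 2)
      = 1/(2*π*I) * (g1 m τ z₂ j z₁ - g2 m τ z₁ j z₂) := by
    intro j
    rw [hQP j]
    unfold g1 g2
    exact algebra_id (exp (2*π*I*(j:ℂ)*(m:ℂ)*(z₁+z₂))) (exp (-(2*π*I*(j:ℂ)*(m:ℂ)*(z₁+z₂))))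
      (exp (2*π*I*τ*((m:ℂ)*(j:ℂ)^2))) (exp (2*π*I*τ*(j:ℂ))) (exp (2*π*I*z₁))
      (exp (-(2*π*I*z₂))) (2*π*I*(j:ℂ)*(m:ℂ)) (hD₁ne j) (hD₂ne j)
  rw [tsum_congr hterm, tsum_mul_left, Summable.tsum_sub key₁'.summable key₂'.summable]
  ring
end KW
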